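/- In the tower field construction, let V_k = span_{GF(2)}{v₀,…,v_{k−1}} and s_k(x) = ∏_{b∈V_k}(x−b). Then s_k(v_k) = 1 for all k. -/

import Mathlib

open Finset
set_option linter.unusedSectionVars false

section Aux

variable {F : Type*} [Field F] [CharP F 2]

lemma v_eq {x v : ℕ → F}
    (hv : ∀ k, v k = ∏ j ∈ Finset.range k, if k.testBit j then x (j + 1) else 1)
    {k n : ℕ} (h : k < 2 ^ n) :
    v k = ∏ j ∈ Finset.range n, if k.testBit j then x (j + 1) else 1 := by
  rw [hv k]
  rcases le_total k n with hkn | hkn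
  · refine Finset.prod_subset (Finset.range_subset_range.mpr hkn) ?_
    intro j hj hj'
    simp only [Finset.mem_range] at hj hj'
    have : k < 2 ^ j := lt_of_le_of_lt (by omega) (show j < 2 ^ j from Nat.lt_two_pow_self)
    simp [Nat.testBit_lt_two_pow this]
  · refine (Finset.prod_subset (Finset.range_subset_range.mpr hkn) ?_).symm
    intro j hj hj'
    simp only [Finset.mem_range] at hj hj'
    have : k < 2 ^ j := lt_of_lt_of_le h (Nat.pow_le_pow_right (by norm_num) (by omega))
    simp [Nat.testBit_lt_two_pow this]

lemma v_zero {x v : ℕ → F}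
    (hv : ∀ k, v k = ∏ j ∈ Finset.range k, if k.testBit j then x (j + 1) else 1) :
    v 0 = 1 := by simp [hv 0]

lemma v_two_pow {x v : ℕ → F}
    (hv : ∀ k, v k = ∏ j ∈ Finset.range k, if k.testBit j then x (j + 1) else 1)
    (j : ℕ) : v (2 ^ j) = x (j + 1) := by
  rw [v_eq hv (show 2 ^ j < 2 ^ (j + 1) by exact Nat.pow_lt_pow_succ one_lt_two)]
  rw [Finset.prod_eq_single_of_mem j (Finset.mem_range.mpr (Nat.lt_succ_self j))]
  · simp [Nat.testBit_two_pow_self]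
  · intro b _ hb
    simp [Nat.testBit_two_pow_of_ne (Ne.symm hb)]

lemma v_ones {x v : ℕ → F}
    (hv : ∀ k, v k = ∏ j ∈ Finset.range k, if k.testBit j then x (j + 1) else 1)
    (n : ℕ) : v (2 ^ n - 1) = ∏ i ∈ Finset.range n, x (i + 1) := by
  rw [v_eq hv (show 2 ^ n - 1 < 2 ^ n by have := Nat.two_pow_pos n; omega)]
  refine Finset.prod_congr rfl ?_
  intro i hi
  simp only [Finset.mem_range] at hi
  simp [Nat.testBit_two_pow_sub_one, hi]

lemma v_mul {x v : ℕ → F}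
    (hv : ∀ k, v k = ∏ j ∈ Finset.range k, if k.testBit j then x (j + 1) else 1)
    {j i : ℕ} (hi : i < 2 ^ j) : v (2 ^ j + i) = v (2 ^ j) * v i := by
  rw [v_two_pow hv j]
  rw [v_eq hv (show 2 ^ j + i < 2 ^ (j + 1) by rw [pow_succ]; omega),
      v_eq hv (show i < 2 ^ (j + 1) from lt_trans hi (Nat.pow_lt_pow_succ one_lt_two))]
  rw [Finset.prod_range_succ, Finset.prod_range_succ]
  have h1 : (2 ^ j + i).testBit j = true := by
    rw [Nat.testBit_two_pow_add_eq, Nat.testBit_lt_two_pow hi]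
    rfl
  have h2 : i.testBit j = false := Nat.testBit_lt_two_pow hi
  rw [h1, h2]
  simp only [if_true, if_false, mul_one]
  have : ∀ t ∈ Finset.range j, (if (2 ^ j + i).testBit t then x (t + 1) else 1)
      = (if i.testBit t then x (t + 1) else 1) := by
    intro t ht
    simp only [Finset.mem_range] at ht
    rw [Nat.testBit_two_pow_add_gt ht]
  rw [Finset.prod_congr rfl this, mul_comm]
  simp

end Aux
lemma phi_add {F : Type*} [Field F] [CharP F 2] (v : ℕ → F) (A B : Finset ℕ) :
    (∑ j ∈ A, v j) + (∑ j ∈ B, v j) = ∑ j ∈ (A ∪ B) \ (A ∩ B), v j := by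
  rw [← Finset.sum_union_inter]
  rw [← Finset.sum_sdiff (Finset.inter_subset_union (s := A) (t := B))]
  rw [add_assoc, CharTwo.add_self_eq_zero, add_zero]

lemma sum_injOn {F : Type*} [Field F] [CharP F 2] [DecidableEq F] (v : ℕ → F) :
    ∀ k : ℕ, (∀ m, m < k → v m ∉ (Finset.range m).powerset.image (fun S => ∑ j ∈ S, v j)) →
    ∀ S ∈ (Finset.range k).powerset, ∀ T ∈ (Finset.range k).powerset,
      (∑ j ∈ S, v j) = (∑ j ∈ T, v j) → S = T := by
  intro k
  induction k with
  | zero =>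
    intro _ S hS T hT _
    simp only [Finset.range_zero, Finset.powerset_empty, Finset.mem_singleton] at hS hT
    rw [hS, hT]
  | succ k ih =>
    intro h S hS T hT hST
    simp only [Finset.mem_powerset] at hS hT
    have h' : ∀ m, m < k → v m ∉ (Finset.range m).powerset.image (fun S => ∑ j ∈ S, v j) :=
      fun m hm => h m (by omega)
    have hSk : S.erase k ⊆ Finset.range k := by
      intro a ha
      have h1 := Finset.mem_of_mem_erase ha
      have h2 := Finset.ne_of_mem_erase ha
      have := hS h1
      simp only [Finset.mem_range] at this ⊢
      omega
    have hTk : T.erase k ⊆ Finset.range k := by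
      intro a ha
      have h1 := Finset.mem_of_mem_erase ha
      have h2 := Finset.ne_of_mem_erase ha
      have := hT h1
      simp only [Finset.mem_range] at this ⊢
      omega
    -- contradiction helper: if exactly one side contains k
    have key : ∀ S T : Finset ℕ, S ⊆ Finset.range (k+1) → T ⊆ Finset.range (k+1) →
        (∑ j ∈ S, v j) = (∑ j ∈ T, v j) → k ∈ S → k ∉ T → False := by
      intro S T hS hT hST hkS hkT
      have hS' : S.erase k ⊆ Finset.range k := by
        intro a ha
        have h1 := Finset.mem_of_mem_erase ha
        have h2 := Finset.ne_of_mem_erase ha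
        have := hS h1
        simp only [Finset.mem_range] at this ⊢
        omega
      have hT' : T ⊆ Finset.range k := by
        intro a ha
        have := hT ha
        simp only [Finset.mem_range] at this ⊢
        have : a ≠ k := fun hak => hkT (hak ▸ ha)
        omega
      have hsum : v k + ∑ j ∈ S.erase k, v j = ∑ j ∈ T, v j := by
        rw [Finset.add_sum_erase _ _ hkS]; exact hST
      have hvk : v k = (∑ j ∈ T, v j) + (∑ j ∈ S.erase k, v j) := by
        have := CharTwo.add_self_eq_zero (R := F) (∑ j ∈ S.erase k, v j)
        linear_combination hsum - this
      rw [phi_add] at hvk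
      exact h k (Nat.lt_succ_self k) (Finset.mem_image.mpr
        ⟨(T ∪ S.erase k) \ (T ∩ S.erase k), Finset.mem_powerset.mpr
          (fun a ha => by
            have := Finset.mem_sdiff.mp ha
            rcases Finset.mem_union.mp this.1 with h | h
            · exact hT' h
            · exact hS' h), hvk.symm⟩)
    by_cases hkS : k ∈ S <;> by_cases hkT : k ∈ T
    · have hsum : ∑ j ∈ S.erase k, v j = ∑ j ∈ T.erase k, v j := by
        have h1 := Finset.add_sum_erase _ v hkS
        have h2 := Finset.add_sum_erase _ v hkT
        have h3 : v k + ∑ j ∈ S.erase k, v j = v k + ∑ j ∈ T.erase k, v j := by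
          rw [h1, h2]; exact hST
        exact add_left_cancel h3
      have := ih h' _ (Finset.mem_powerset.mpr hSk) _ (Finset.mem_powerset.mpr hTk) hsum
      have hS2 : S = insert k (S.erase k) := (Finset.insert_erase hkS).symm
      have hT2 : T = insert k (T.erase k) := (Finset.insert_erase hkT).symm
      rw [hS2, hT2, this]
    · exact absurd (key S T hS hT hST hkS hkT) not_false
    · exact absurd (key T S hT hS hST.symm hkT hkS) not_false
    · have hS' : S ⊆ Finset.range k := by
        intro a ha
        have := hS ha
        simp only [Finset.mem_range] at this ⊢
        have : a ≠ k := fun hak => hkS (hak ▸ ha)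
        omega
      have hT' : T ⊆ Finset.range k := by
        intro a ha
        have := hT ha
        simp only [Finset.mem_range] at this ⊢
        have : a ≠ k := fun hak => hkT (hak ▸ ha)
        omega
      exact ih h' _ (Finset.mem_powerset.mpr hS') _ (Finset.mem_powerset.mpr hT') hST

lemma v_not_mem {F : Type*} [Field F] [DecidableEq F] (v : ℕ → F) (m : ℕ)
    (hs : ∏ b ∈ (Finset.range m).powerset.image (fun S => ∑ j ∈ S, v j), (v m - b) = 1) :
    v m ∉ (Finset.range m).powerset.image (fun S => ∑ j ∈ S, v j) := by
  intro hmem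
  have : (∏ b ∈ (Finset.range m).powerset.image (fun S => ∑ j ∈ S, v j), (v m - b)) = 0 :=
    Finset.prod_eq_zero hmem (by simp)
  rw [hs] at this
  exact one_ne_zero this
lemma pow_two_pow_of_sq {F : Type*} [Field F] [CharP F 2] {t w : F} (h : t ^ 2 = t + w) :
    ∀ m : ℕ, t ^ (2 ^ m) = t + ∑ i ∈ Finset.range m, w ^ (2 ^ i) := by
  intro m
  induction m with
  | zero => simp
  | succ m ih =>
    have hsq : ∀ i : ℕ, (w ^ (2 ^ i)) ^ 2 = w ^ (2 ^ (i + 1)) := by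
      intro i; rw [← pow_mul, pow_succ]
    calc t ^ (2 ^ (m + 1)) = (t ^ (2 ^ m)) ^ 2 := by rw [← pow_mul, pow_succ]
      _ = (t + ∑ i ∈ Finset.range m, w ^ (2 ^ i)) ^ 2 := by rw [ih]
      _ = t ^ 2 + (∑ i ∈ Finset.range m, w ^ (2 ^ i)) ^ 2 := by
          haveI : Fact (Nat.Prime 2) := ⟨Nat.prime_two⟩
          rw [add_pow_char]
      _ = (t + w) + ∑ i ∈ Finset.range m, (w ^ (2 ^ i)) ^ 2 := by rw [h, sum_pow_char]
      _ = (t + w) + ∑ i ∈ Finset.range m, w ^ (2 ^ (i + 1)) := by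
          rw [Finset.sum_congr rfl fun i _ => hsq i]
      _ = t + ∑ i ∈ Finset.range (m + 1), w ^ (2 ^ i) := by
          rw [Finset.sum_range_succ', pow_zero, pow_one]; ring

lemma key {F : Type*} [Field F] [CharP F 2] (x v : ℕ → F)
    (hx : ∀ m, x (m + 1) ^ 2 + x (m + 1) = ∏ j ∈ Finset.range m, x (j + 1))
    (hv : ∀ k, v k = ∏ j ∈ Finset.range k, if k.testBit j then x (j + 1) else 1)
    (j : ℕ) :
    (∀ i, i < 2 ^ j → (v i) ^ (2 ^ (2 ^ j)) = v i) ∧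
    ((v (2 ^ j)) ^ (2 ^ (2 ^ j)) = v (2 ^ j) + 1) ∧
    (∑ i ∈ Finset.range (2 ^ j), (v (2 ^ j - 1)) ^ (2 ^ i) = 1) := by
  have h2 : (2 : F) = 0 := CharTwo.two_eq_zero
  haveI : Fact (Nat.Prime 2) := ⟨Nat.prime_two⟩
  induction j with
  | zero =>
    refine ⟨?_, ?_, ?_⟩
    · intro i hi
      have : i = 0 := by omega
      subst this
      rw [v_zero hv]; norm_num
    · have hv1 : v (2 ^ 0) = x 1 := by
        have := v_two_pow hv 0
        simpa using this
      have hx0 := hx 0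
      simp only [Finset.range_zero, Finset.prod_empty] at hx0
      rw [hv1]
      norm_num
      linear_combination hx0 - x 1 * h2
    · simp [v_zero hv]
  | succ j ih =>
    obtain ⟨ha, hb, hc⟩ := ih
    set q : ℕ := 2 ^ j with hqdef
    have hq1 : 1 ≤ q := Nat.one_le_two_pow
    have h2q : 2 ^ (j + 1) = q + q := by rw [pow_succ]; omega
    have hpow : ∀ y : F, y ^ (2 ^ (2 ^ (j + 1))) = (y ^ (2 ^ q)) ^ (2 ^ q) := by
      intro y
      rw [← pow_mul, ← pow_add, h2q]
    have hone : (1 : F) + 1 = 0 := by linear_combination h2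
    -- (a')
    have ha' : ∀ i, i < 2 ^ (j + 1) → (v i) ^ (2 ^ (2 ^ (j + 1))) = v i := by
      intro i hi
      rw [hpow]
      by_cases hiq : i < q
      · rw [ha i hiq, ha i hiq]
      · have hi' : i - q < q := by omega
        have hvi : v i = v q * v (i - q) := by
          have := v_mul hv hi'
          rwa [show 2 ^ j + (i - q) = i by omega] at this
        rw [hvi, mul_pow, hb, ha _ hi', mul_pow, ha _ hi']
        have : (v q + 1) ^ (2 ^ q) = v q + 1 + 1 := by
          rw [add_pow_char_pow, hb, one_pow]
        rw [this]
        linear_combination (v (i - q)) * hone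
    -- (c')
    have hw : v (2 ^ (j + 1) - 1) = v q * v (q - 1) := by
      have := v_mul hv (show q - 1 < 2 ^ j by omega)
      rwa [show 2 ^ j + (q - 1) = 2 ^ (j + 1) - 1 by omega] at this
    set w : F := v (2 ^ (j + 1) - 1) with hwdef
    have hwq : w ^ (2 ^ q) = w + v (q - 1) := by
      rw [hw, mul_pow, hb, ha (q - 1) (by omega)]
      ring
    have hc' : ∑ i ∈ Finset.range (2 ^ (j + 1)), w ^ (2 ^ i) = 1 := by
      rw [h2q, Finset.sum_range_add]
      have hterm : ∀ i : ℕ, w ^ (2 ^ (q + i)) = w ^ (2 ^ i) + (v (q - 1)) ^ (2 ^ i) := by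
        intro i
        rw [pow_add, pow_mul, hwq, add_pow_char_pow]
      rw [Finset.sum_congr rfl fun i _ => hterm i, ← Finset.sum_add_distrib]
      have : ∀ i ∈ Finset.range q, w ^ (2 ^ i) + (w ^ (2 ^ i) + (v (q - 1)) ^ (2 ^ i))
          = (v (q - 1)) ^ (2 ^ i) := by
        intro i _
        rw [← add_assoc, CharTwo.add_self_eq_zero, zero_add]
      rw [Finset.sum_congr rfl this]
      exact hc
    -- (b')
    have hb' : (v (2 ^ (j + 1))) ^ (2 ^ (2 ^ (j + 1))) = v (2 ^ (j + 1)) + 1 := by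
      have ht : v (2 ^ (j + 1)) = x (j + 2) := v_two_pow hv (j + 1)
      have hxj := hx (j + 1)
      have hw2 : w = ∏ i ∈ Finset.range (j + 1), x (i + 1) := v_ones hv (j + 1)
      have ht2 : (v (2 ^ (j + 1))) ^ 2 = v (2 ^ (j + 1)) + w := by
        rw [ht, hw2]
        linear_combination hxj - x (j + 2) * h2
      rw [pow_two_pow_of_sq ht2 (2 ^ (j + 1)), hc']
    exact ⟨ha', hb', hc'⟩
open Polynomial in
lemma prod_eq_frob {F : Type*} [Field F] [CharP F 2] [DecidableEq F]
    (S : Finset F) (n : ℕ) (hn : 1 ≤ n) (hcard : S.card = 2 ^ n)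
    (hroot : ∀ b ∈ S, b ^ (2 ^ n) = b) (z : F) :
    ∏ b ∈ S, (z - b) = z ^ (2 ^ n) - z := by
  set p : F[X] := X ^ (2 ^ n) - X with hp
  have hdegX : (X : F[X]).degree < (2 ^ n : ℕ) := by
    rw [degree_X]
    exact_mod_cast Nat.one_lt_two_pow_iff.mpr (by omega)
  have hmonic : p.Monic := monic_X_pow_sub hdegX
  have hpne : p ≠ 0 := hmonic.ne_zero
  have hdeg : p.natDegree = 2 ^ n := by
    rw [hp]
    rw [natDegree_sub_eq_left_of_natDegree_lt] <;> simp [Nat.one_lt_two_pow_iff, hn]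
    omega
  have hle : S.val ≤ p.roots := by
    rw [Multiset.le_iff_count]
    intro a
    by_cases ha : a ∈ S
    · have h1 : S.val.count a = 1 := by
        rw [Multiset.count_eq_one_of_mem S.nodup ha]
      rw [h1, count_roots]
      rw [Nat.succ_le_iff, rootMultiplicity_pos hpne]
      simp only [IsRoot, hp, eval_sub, eval_pow, eval_X]
      rw [hroot a ha, sub_self]
    · rw [Multiset.count_eq_zero_of_notMem (by simpa using ha)]
      omega
  have hdvd : (∏ b ∈ S, (X - C b)) ∣ p := by
    have := (Multiset.prod_X_sub_C_dvd_iff_le_roots hpne S.val).mpr hle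
    rwa [Finset.prod_eq_multiset_prod]
  obtain ⟨c, hc⟩ := hdvd
  have hAmonic : (∏ b ∈ S, (X - C b)).Monic := monic_prod_of_monic _ _ fun b _ => monic_X_sub_C b
  have hAdeg : (∏ b ∈ S, (X - C b)).natDegree = 2 ^ n := by
    rw [natDegree_prod_of_monic _ _ fun b _ => monic_X_sub_C b]
    simp [hcard]
  have hcne : c ≠ 0 := by
    intro h
    rw [h, mul_zero] at hc
    exact hpne hc
  have hcdeg : c.natDegree = 0 := by
    have := hc ▸ hdeg
    rw [natDegree_mul hAmonic.ne_zero hcne, hAdeg] at this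
    omega
  have hc1 : c = 1 := by
    have hlead : p.leadingCoeff = (∏ b ∈ S, (X - C b)).leadingCoeff * c.leadingCoeff := by
      rw [hc, leadingCoeff_mul]
    rw [hmonic.leadingCoeff, hAmonic.leadingCoeff, one_mul] at hlead
    rw [leadingCoeff, hcdeg] at hlead
    rw [Polynomial.eq_C_of_natDegree_eq_zero hcdeg, ← hlead, map_one]
  have hpA : p = ∏ b ∈ S, (X - C b) := by rw [hc, hc1, mul_one]
  have := congrArg (Polynomial.eval z) hpA
  simp only [hp, eval_sub, eval_pow, eval_X, eval_prod, eval_C] at this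
  rw [← this]

/-- In the tower field construction, let `V_k` be the `GF(2)`-span of
`v₀, …, v_{k−1}` and `s_k(x) = ∏_{b ∈ V_k}(x − b)`.  Then `s_k(v_k) = 1`
for all `k`. -/
theorem stmt_14 (F : Type*) [Field F] [CharP F 2] [DecidableEq F] (x : ℕ → F)
    (hx : ∀ m, x (m + 1) ^ 2 + x (m + 1) = ∏ j ∈ Finset.range m, x (j + 1))
    (v : ℕ → F)
    (hv : ∀ k, v k = ∏ j ∈ Finset.range k, if k.testBit j then x (j + 1) else 1) :
    ∀ k, ∏ b ∈ ((Finset.range k).powerset).image (fun S => ∑ j ∈ S, v j),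
        (v k - b) = 1 := by
  have h2 : (2 : F) = 0 := CharTwo.two_eq_zero
  haveI : Fact (Nat.Prime 2) := ⟨Nat.prime_two⟩
  intro k
  induction k using Nat.strong_induction_on with
  | _ k ih =>
  have hnot : ∀ m, m < k → v m ∉ (Finset.range m).powerset.image (fun S => ∑ j ∈ S, v j) :=
    fun m hm => v_not_mem v m (ih m hm)
  have hinj : ∀ n, n ≤ k → ∀ S ∈ (Finset.range n).powerset, ∀ T ∈ (Finset.range n).powerset,
      (∑ j ∈ S, v j) = (∑ j ∈ T, v j) → S = T :=
    fun n hn => sum_injOn v n (fun m hm => hnot m (by omega))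
  have hinjOn : ∀ n, n ≤ k → Set.InjOn (fun S : Finset ℕ => ∑ j ∈ S, v j)
      ((Finset.range n).powerset : Set (Finset ℕ)) := by
    intro n hn a ha b hb hab
    exact hinj n hn a (Finset.mem_coe.mp ha) b (Finset.mem_coe.mp hb) hab
  have hcard : ∀ n, n ≤ k →
      ((Finset.range n).powerset.image (fun S => ∑ j ∈ S, v j)).card = 2 ^ n := by
    intro n hn
    rw [Finset.card_image_of_injOn (hinjOn n hn), Finset.card_powerset, Finset.card_range]
  rcases Nat.eq_zero_or_pos k with hk0 | hkpos
  · subst hk0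
    simp only [Finset.range_zero, Finset.powerset_empty, Finset.image_singleton,
      Finset.sum_empty, Finset.prod_singleton, sub_zero]
    exact v_zero hv
  -- k ≥ 1
  obtain ⟨j, hq_le, hlt⟩ : ∃ j, 2 ^ j ≤ k ∧ k < 2 ^ (j + 1) :=
    ⟨Nat.log 2 k, Nat.pow_log_le_self 2 (by omega), Nat.lt_pow_succ_log_self (by norm_num) k⟩
  have h2q : 2 ^ (j + 1) = 2 ^ j + 2 ^ j := by rw [pow_succ]; omega
  obtain ⟨ha, hb, -⟩ := key x v hx hv j
  obtain ⟨l, hk, hlq⟩ : ∃ l, k = 2 ^ j + l ∧ l < 2 ^ j := ⟨k - 2 ^ j, by omega, by omega⟩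
  -- roots of X^(2^(2^j)) - X among V_{2^j}
  have hroot : ∀ n, n ≤ 2 ^ j →
      ∀ b ∈ (Finset.range n).powerset.image (fun S => ∑ j ∈ S, v j), b ^ (2 ^ (2 ^ j)) = b := by
    intro n hn b hb'
    obtain ⟨S, hS, rfl⟩ := Finset.mem_image.mp hb'
    rw [sum_pow_char_pow]
    refine Finset.sum_congr rfl fun i hi => ?_
    have : i < n := Finset.mem_range.mp (Finset.mem_powerset.mp hS hi)
    exact ha i (by omega)
  by_cases hl0 : l = 0
  · -- k is a power of two
    have hkq : k = 2 ^ j := by omega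
    subst hkq
    rw [prod_eq_frob _ (2 ^ j) Nat.one_le_two_pow (hcard _ le_rfl) (hroot _ le_rfl), hb]
    ring
  · -- k = 2^j + l, 0 < l < 2^j
    have hprodq : ∀ z : F,
        ∏ b ∈ (Finset.range (2 ^ j)).powerset.image (fun S => ∑ j ∈ S, v j), (z - b)
          = z ^ (2 ^ (2 ^ j)) - z := by
      intro z
      exact prod_eq_frob _ (2 ^ j) Nat.one_le_two_pow (hcard _ hq_le) (hroot _ le_rfl) z
    have hvk : v k = v (2 ^ j) * v l := by
      have := v_mul hv hlq
      rwa [← hk] at this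
    have hphi : ∀ A ∈ (Finset.range (2 ^ j)).powerset, ∀ B ∈ (Finset.range l).powerset,
        (∑ a ∈ A ∪ B.image (fun b => 2 ^ j + b), v a)
          = (∑ a ∈ A, v a) + v (2 ^ j) * ∑ b ∈ B, v b := by
      intro A hA B hB
      simp only [Finset.mem_powerset] at hA hB
      have hdisj : Disjoint A (B.image (fun b => 2 ^ j + b)) := by
        rw [Finset.disjoint_left]
        intro a haA haB
        obtain ⟨b, _, rfl⟩ := Finset.mem_image.mp haB
        have := Finset.mem_range.mp (hA haA)
        omega
      rw [Finset.sum_union hdisj, Finset.sum_image (fun b _ c _ h => by omega)]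
      congr 1
      rw [Finset.mul_sum]
      refine Finset.sum_congr rfl fun b hb => ?_
      have hbl : b < 2 ^ j := by
        have := Finset.mem_range.mp (hB hb)
        omega
      exact v_mul hv hbl
    calc ∏ b ∈ ((Finset.range k).powerset).image (fun S => ∑ j ∈ S, v j), (v k - b)
        = ∏ S ∈ (Finset.range k).powerset, (v k - ∑ j ∈ S, v j) :=
          Finset.prod_image (hinj k le_rfl)
      _ = ∏ p ∈ (Finset.range (2 ^ j)).powerset ×ˢ (Finset.range l).powerset,
            (v k - ((∑ a ∈ p.1, v a) + v (2 ^ j) * ∑ b ∈ p.2, v b)) := by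
          refine (Finset.prod_nbij' (fun p => p.1 ∪ p.2.image (fun b => 2 ^ j + b))
            (fun S => (S ∩ Finset.range (2 ^ j),
              (S.filter (fun a => 2 ^ j ≤ a)).image (fun a => a - 2 ^ j)))
            ?_ ?_ ?_ ?_ ?_).symm
          · rintro ⟨A, B⟩ hp
            simp only [Finset.mem_product, Finset.mem_powerset] at hp
            obtain ⟨hA, hB⟩ := hp
            rw [Finset.mem_powerset]
            intro a ha
            rcases Finset.mem_union.mp ha with h | h
            · have := Finset.mem_range.mp (hA h)
              exact Finset.mem_range.mpr (by omega)
            · obtain ⟨b, hb, rfl⟩ := Finset.mem_image.mp h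
              have := Finset.mem_range.mp (hB hb)
              exact Finset.mem_range.mpr (by omega)
          · intro S hS
            simp only [Finset.mem_powerset] at hS
            rw [Finset.mem_product]
            constructor
            · rw [Finset.mem_powerset]
              exact Finset.inter_subset_right
            · rw [Finset.mem_powerset]
              intro a ha
              obtain ⟨b, hb, rfl⟩ := Finset.mem_image.mp ha
              obtain ⟨hbS, hqb⟩ := Finset.mem_filter.mp hb
              have := Finset.mem_range.mp (hS hbS)
              exact Finset.mem_range.mpr (by omega)
          · rintro ⟨A, B⟩ hp
            simp only [Finset.mem_product, Finset.mem_powerset] at hp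
            obtain ⟨hA, hB⟩ := hp
            have hAq : ∀ a ∈ A, a < 2 ^ j := fun a ha => Finset.mem_range.mp (hA ha)
            have hBl : ∀ b ∈ B, b < l := fun b hb => Finset.mem_range.mp (hB hb)
            dsimp only
            rw [Prod.mk.injEq]
            constructor
            · ext a
              simp only [Finset.mem_inter, Finset.mem_union, Finset.mem_image, Finset.mem_range]
              constructor
              · rintro ⟨h1 | ⟨b, hb, rfl⟩, h3⟩
                · exact h1
                · exact absurd h3 (by omega)
              · intro ha
                exact ⟨Or.inl ha, hAq a ha⟩
            · ext b
              simp only [Finset.mem_image, Finset.mem_filter, Finset.mem_union]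
              constructor
              · rintro ⟨c, ⟨hc1 | hc1, hc2⟩, rfl⟩
                · exact absurd hc2 (by have := hAq c hc1; omega)
                · obtain ⟨b', hb', rfl⟩ := hc1
                  rwa [Nat.add_sub_cancel_left]
              · intro hb
                exact ⟨2 ^ j + b, ⟨Or.inr ⟨b, hb, rfl⟩, by omega⟩, by omega⟩
          · intro S hS
            simp only [Finset.mem_powerset] at hS
            dsimp only
            ext a
            simp only [Finset.mem_union, Finset.mem_inter, Finset.mem_range, Finset.mem_image,
              Finset.mem_filter]
            constructor
            · rintro (⟨h1, _⟩ | ⟨b, ⟨c, ⟨hc, hqc⟩, rfl⟩, rfl⟩)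
              · exact h1
              · rwa [Nat.add_sub_cancel' hqc]
            · intro haS
              by_cases haq : a < 2 ^ j
              · exact Or.inl ⟨haS, haq⟩
              · exact Or.inr ⟨a - 2 ^ j, ⟨a, ⟨haS, by omega⟩, rfl⟩, by omega⟩
          · rintro ⟨A, B⟩ hp
            simp only [Finset.mem_product] at hp
            dsimp only
            rw [hphi A hp.1 B hp.2]
      _ = ∏ B ∈ (Finset.range l).powerset, ∏ A ∈ (Finset.range (2 ^ j)).powerset,
            (v k - ((∑ a ∈ A, v a) + v (2 ^ j) * ∑ b ∈ B, v b)) :=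
          Finset.prod_product_right _ _ _
      _ = ∏ B ∈ (Finset.range l).powerset, (v l - ∑ b ∈ B, v b) := by
          refine Finset.prod_congr rfl fun B hB => ?_
          have hBsub := Finset.mem_powerset.mp hB
          have hc : (v l + ∑ b ∈ B, v b) ^ (2 ^ (2 ^ j)) = v l + ∑ b ∈ B, v b := by
            rw [add_pow_char_pow, sum_pow_char_pow, ha l hlq]
            rw [Finset.sum_congr rfl fun b hb => ha b
              (by have := Finset.mem_range.mp (hBsub hb); omega)]
          calc ∏ A ∈ (Finset.range (2 ^ j)).powerset,
                (v k - ((∑ a ∈ A, v a) + v (2 ^ j) * ∑ b ∈ B, v b))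
              = ∏ A ∈ (Finset.range (2 ^ j)).powerset,
                ((v (2 ^ j) * (v l + ∑ b ∈ B, v b)) - ∑ a ∈ A, v a) := by
                refine Finset.prod_congr rfl fun A _ => ?_
                rw [hvk]
                linear_combination -(v (2 ^ j) * ∑ b ∈ B, v b) * h2
            _ = ∏ b ∈ (Finset.range (2 ^ j)).powerset.image (fun S => ∑ j ∈ S, v j),
                  ((v (2 ^ j) * (v l + ∑ b ∈ B, v b)) - b) :=
                (Finset.prod_image (hinj (2 ^ j) hq_le)).symm
            _ = (v (2 ^ j) * (v l + ∑ b ∈ B, v b)) ^ (2 ^ (2 ^ j))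
                  - v (2 ^ j) * (v l + ∑ b ∈ B, v b) := hprodq _
            _ = v l - ∑ b ∈ B, v b := by
                rw [mul_pow, hb, hc]
                linear_combination (∑ b ∈ B, v b) * h2
      _ = ∏ b ∈ ((Finset.range l).powerset).image (fun S => ∑ j ∈ S, v j), (v l - b) :=
          (Finset.prod_image (hinj l (by omega))).symm
      _ = 1 := ih l (by omega)
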